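/- Let G be a connected plane graph, T a spanning tree of G, and T♯ the dual tree in G*. For any edge e of T, the edges of G whose detours in T use e (equivalently, the edges f of G \ T such that the unique cycle in T + f contains e, together with e itself) correspond exactly to the edges of the unique cycle in T♯ + e*. -/

import Mathlib

open SimpleGraph

/-- The congestion of the edge `e` of a spanning tree `T` of `G`: the number of edges
of `G` with one endpoint in each of the two components of `T - e`. -/
noncomputable def edgeCong {V : Type*} (G T : SimpleGraph V) (e : Sym2 V) : ℕ :=
  {f | f ∈ G.edgeSet ∧ ∃ x y, f = s(x, y) ∧ ¬ ((T.deleteEdges {e}).Reachable x y)}.ncard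

/-- The edge congestion `ec(G:T)`. -/
noncomputable def treeCong {V : Type*} (G T : SimpleGraph V) : ℕ :=
  sSup (edgeCong G T '' T.edgeSet)

/-- `T` is a spanning tree of `G`. -/
def IsSpanningTree {V : Type*} (G T : SimpleGraph V) : Prop := T ≤ G ∧ T.IsTree

/-- The spanning tree congestion `s(G)`. -/
noncomputable def stc {V : Type*} (G : SimpleGraph V) : ℕ :=
  sInf {n | ∃ T, IsSpanningTree G T ∧ treeCong G T = n}


/-- `D` is the edge set of a cycle of `G`. -/
def IsCycleEdges {V : Type*} (G : SimpleGraph V) (D : Set (Sym2 V)) : Prop :=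
  ∃ (v : V) (c : G.Walk v v), c.IsCycle ∧ D = {e | e ∈ c.edges}

/-- `D` is an edge cut of `G`: the set of edges between some vertex set `A`
and its complement. -/
def IsCutEdges {V : Type*} (G : SimpleGraph V) (D : Set (Sym2 V)) : Prop :=
  ∃ A : Set V, D = {f | f ∈ G.edgeSet ∧ ∃ x ∈ A, ∃ y ∈ Aᶜ, f = s(x, y)}

/-- `D` is a minimal (nonempty) edge cut of `G`. -/
def IsMinCut {V : Type*} (G : SimpleGraph V) (D : Set (Sym2 V)) : Prop :=
  IsCutEdges G D ∧ D.Nonempty ∧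
    ∀ D' ⊆ D, IsCutEdges G D' → D'.Nonempty → D' = D

/-- A connected plane graph `G` together with its dual graph `Gd`, presented
combinatorially (Whitney): vertices of `Gd` are the faces of `G`, `O` is the exterior
face, `d` is the bijection between edges of `G` and edges of `Gd` (each dual edge joins
the two faces on either side of the original edge), and duality is characterized by
cycles of one graph corresponding to minimal edge cuts of the other. -/
structure PlaneDual (V F : Type*) where
  G : SimpleGraph V
  Gd : SimpleGraph F
  O : F
  d : Sym2 V → Sym2 F
  dBij : Set.BijOn d G.edgeSet Gd.edgeSet
  conn : G.Connected
  connd : Gd.Connected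
  cycle_iff_minCut : ∀ D ⊆ G.edgeSet, IsCycleEdges G D ↔ IsMinCut Gd (d '' D)
  minCut_iff_cycle : ∀ D ⊆ G.edgeSet, IsMinCut G D ↔ IsCycleEdges Gd (d '' D)

variable {V F : Type*}

/-- An outer edge: an edge of `G` on the boundary of the exterior face. -/
def IsOuter (P : PlaneDual V F) (e : Sym2 V) : Prop :=
  e ∈ P.G.edgeSet ∧ P.O ∈ P.d e

/-- The index `i(F, e)`: the length of a shortest path in the dual graph from the
exterior face `O` to the face `Fc` whose first edge is `e*`. -/
noncomputable def pIndex (P : PlaneDual V F) (Fc : F) (e : Sym2 V) : ℕ :=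
  sInf {n | ∃ p : P.Gd.Walk P.O Fc, p.IsPath ∧ p.edges.head? = some (P.d e) ∧ p.length = n}

/-- The absolute index `i(F) = min over outer edges e of i(F, e)`. -/
noncomputable def absIndex (P : PlaneDual V F) (Fc : F) : ℕ :=
  sInf {n | ∃ e, IsOuter P e ∧ pIndex P Fc e = n}

/-- The dual tree `T♯` of a spanning tree `T` of `G`: the spanning subgraph of the dual
graph with edge set `{e* : e ∉ E(T)}`. -/
def dualTree (P : PlaneDual V F) (T : SimpleGraph V) : SimpleGraph F :=
  SimpleGraph.fromEdgeSet (P.d '' (P.G.edgeSet \ T.edgeSet))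

/-- `e` lies on the detour of `f`: a path in `T` joining the endpoints of `f`
passes through `e` (for a tree `T` this path is unique). -/
def OnDetour {W : Type*} (T : SimpleGraph W) (e f : Sym2 W) : Prop :=
  ∃ x y, f = s(x, y) ∧ ∃ p : T.Walk x y, p.IsPath ∧ e ∈ p.edges

section helpers
variable {W : Type*} {Γ : SimpleGraph W}

lemma walk_same_side (A : Set W) {x y : W} (p : Γ.Walk x y)
    (h : ∀ a b, Γ.Adj a b → s(a, b) ∈ p.edges → (a ∈ A ↔ b ∈ A)) : x ∈ A ↔ y ∈ A := by
  induction p with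
  | nil => rfl
  | cons hadj q ih =>
    exact (h _ _ hadj (by simp)).trans (ih fun a b hab hm => h a b hab (by simp [hm]))

private lemma reach_or_aux {T : SimpleGraph W} (x0 y0 : W) {z t : W} (w : T.Walk z t) :
    (T.deleteEdges {s(x0, y0)}).Reachable z t ∨
      (T.deleteEdges {s(x0, y0)}).Reachable z x0 ∨
      (T.deleteEdges {s(x0, y0)}).Reachable z y0 := by
  induction w with
  | nil => exact Or.inl (Reachable.refl _)
  | @cons u c v hadj q ih =>
    by_cases he : s(u, c) = s(x0, y0)
    · rcases Sym2.eq_iff.mp he with ⟨rfl, rfl⟩ | ⟨rfl, rfl⟩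
      · exact Or.inr (Or.inl (Reachable.refl _))
      · exact Or.inr (Or.inr (Reachable.refl _))
    · have huc : (T.deleteEdges {s(x0, y0)}).Reachable u c := Adj.reachable (by simp [he, hadj])
      rcases ih with h | h | h
      · exact Or.inl (huc.trans h)
      · exact Or.inr (Or.inl (huc.trans h))
      · exact Or.inr (Or.inr (huc.trans h))

lemma reach_or {T : SimpleGraph W} (hc : T.Connected) (x0 y0 : W) (z : W) :
    (T.deleteEdges {s(x0, y0)}).Reachable z x0 ∨ (T.deleteEdges {s(x0, y0)}).Reachable z y0 := by
  obtain ⟨w⟩ := hc.1 z x0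
  rcases reach_or_aux x0 y0 w with h | h | h
  · exact Or.inl h
  · exact Or.inl h
  · exact Or.inr h

lemma not_reach_delete {T : SimpleGraph W} (hA : T.IsAcyclic) {x0 y0 : W} (h : T.Adj x0 y0) :
    ¬ (T.deleteEdges {s(x0, y0)}).Reachable x0 y0 :=
  (isAcyclic_iff_forall_adj_isBridge.mp hA h)

end helpers

section fundcut
variable {V : Type*} {G T : SimpleGraph V}

lemma fundamental_cut (hle : T ≤ G) (htree : T.IsTree) {x0 y0 : V}
    (he : s(x0, y0) ∈ T.edgeSet) :
    IsMinCut G {f | f ∈ G.edgeSet ∧ OnDetour T s(x0, y0) f} ∧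
      ∀ f ∈ {f | f ∈ G.edgeSet ∧ OnDetour T s(x0, y0) f}, f = s(x0, y0) ∨ f ∉ T.edgeSet := by
  classical
  have hadj : T.Adj x0 y0 := he
  set Del := T.deleteEdges {s(x0, y0)} with hDel
  have hx0y0 : ¬ Del.Reachable x0 y0 := not_reach_delete htree.2 hadj
  set A : Set V := {z | Del.Reachable x0 z} with hA
  have htot : ∀ z, Del.Reachable z x0 ∨ Del.Reachable z y0 := reach_or htree.1 x0 y0
  have hchar : ∀ x y, Del.Reachable x y ↔ (x ∈ A ↔ y ∈ A) := by
    intro x y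
    constructor
    · intro h
      exact ⟨fun hx => hx.trans h, fun hy => hy.trans h.symm⟩
    · intro h
      rcases htot x with hx | hx
      · have hxA : x ∈ A := hx.symm
        exact hxA.symm.trans (h.mp hxA)
      · have hxA : x ∉ A := fun hh => hx0y0 (hh.trans hx)
        have hyA : y ∉ A := fun hh => hxA (h.mpr hh)
        rcases htot y with hy | hy
        · exact absurd hy.symm hyA
        · exact hx.trans hy.symm
  -- edges of Del are not in the cut of A
  have hDelA : ∀ a b, Del.Adj a b → (a ∈ A ↔ b ∈ A) := fun a b hab => (hchar a b).mp hab.reachable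
  -- detour characterization
  have hdetour : ∀ f, OnDetour T s(x0, y0) f ↔ ∃ x y, f = s(x, y) ∧ ¬ Del.Reachable x y := by
    intro f
    constructor
    · rintro ⟨x, y, rfl, p, hp, hep⟩
      refine ⟨x, y, rfl, fun hreach => ?_⟩
      obtain ⟨q0⟩ := hreach
      have hq := q0.toPath.2
      set q : Del.Walk x y := q0.toPath.1 with hqdef
      have hsub : ∀ g ∈ q.edges, g ∈ T.edgeSet := fun g hg => by
        have := q.edges_subset_edgeSet hg
        rw [hDel, edgeSet_deleteEdges] at this
        exact this.1
      have hpq : p = q.transfer T hsub := by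
        have := isAcyclic_iff_path_unique.mp htree.2 ⟨p, hp⟩ ⟨q.transfer T hsub, hq.transfer hsub⟩
        exact congrArg Subtype.val this
      rw [hpq, Walk.edges_transfer] at hep
      have := q.edges_subset_edgeSet hep
      rw [hDel, edgeSet_deleteEdges] at this
      exact this.2 rfl
    · rintro ⟨x, y, rfl, hnreach⟩
      obtain ⟨p0⟩ := htree.1.1 x y
      refine ⟨x, y, rfl, p0.toPath.1, p0.toPath.2, ?_⟩
      by_contra hne
      apply hnreach
      have hsub : ∀ g ∈ (p0.toPath.1 : T.Walk x y).edges, g ∈ Del.edgeSet := by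
        intro g hg
        rw [hDel, edgeSet_deleteEdges]
        refine ⟨Walk.edges_subset_edgeSet _ hg, ?_⟩
        simp only [Set.mem_singleton_iff]
        rintro rfl
        exact hne hg
      exact ⟨(p0.toPath.1 : T.Walk x y).transfer Del hsub⟩
  -- the detour set is the cut of A
  have hDcut : {f | f ∈ G.edgeSet ∧ OnDetour T s(x0, y0) f} =
      {f | f ∈ G.edgeSet ∧ ∃ x ∈ A, ∃ y ∈ Aᶜ, f = s(x, y)} := by
    ext f
    simp only [Set.mem_setOf_eq, hdetour]
    refine and_congr_right fun _ => ?_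
    constructor
    · rintro ⟨x, y, rfl, hnreach⟩
      rw [hchar] at hnreach
      by_cases hx : x ∈ A
      · exact ⟨x, hx, y, fun hy => hnreach ⟨fun _ => hy, fun _ => hx⟩, rfl⟩
      · have hy : y ∈ A := by
          by_contra hy
          exact hnreach ⟨fun h => absurd h hx, fun h => absurd h hy⟩
        exact ⟨y, hy, x, hx, Sym2.eq_swap.symm⟩
    · rintro ⟨x, hx, y, hy, rfl⟩
      exact ⟨x, y, rfl, fun h => hy ((hchar x y).mp h |>.mp hx)⟩
  have heG : s(x0, y0) ∈ G.edgeSet := edgeSet_subset_edgeSet.mpr hle he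
  constructor
  · refine ⟨⟨A, hDcut⟩, ⟨s(x0, y0), heG, ?_⟩, ?_⟩
    · rw [hdetour]
      exact ⟨x0, y0, rfl, hx0y0⟩
    · -- minimality
      rintro D' hsubD' ⟨A', hA'⟩ ⟨f0, hf0⟩
      -- reachable in Del implies same side of A'
      have hside : ∀ x y, Del.Reachable x y → (x ∈ A' ↔ y ∈ A') := by
        intro x y hr
        obtain ⟨p⟩ := hr
        refine walk_same_side A' p fun a b hab hm => ?_
        by_contra hniff
        have habG : s(a, b) ∈ G.edgeSet :=
          edgeSet_subset_edgeSet.mpr hle (Walk.edges_subset_edgeSet p hm |> fun h => by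
            rw [hDel, edgeSet_deleteEdges] at h; exact h.1)
        have hmemD' : s(a, b) ∈ D' := by
          rw [hA']
          by_cases ha : a ∈ A'
          · exact ⟨habG, a, ha, b, fun hb => hniff ⟨fun _ => hb, fun _ => ha⟩, rfl⟩
          · have hb : b ∈ A' := by
              by_contra hb
              exact hniff ⟨fun h => absurd h ha, fun h => absurd h hb⟩
            exact ⟨habG, b, hb, a, ha, Sym2.eq_swap.symm⟩
        have := hsubD' hmemD'
        rw [hDcut] at this
        obtain ⟨-, xx, hxx, yy, hyy, heq⟩ := this
        have hiff := hDelA a b hab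
        rcases Sym2.eq_iff.mp heq with ⟨rfl, rfl⟩ | ⟨rfl, rfl⟩
        · exact hyy (hiff.mp hxx)
        · exact hyy (hiff.mpr hxx)
      -- f0 crosses both A and A'
      have hf0D := hsubD' hf0
      rw [hDcut] at hf0D
      obtain ⟨hf0G, aa, haa, bb, hbb, hf0eq⟩ := hf0D
      rw [hA'] at hf0
      obtain ⟨-, a', ha', b', hb', hf0eq'⟩ := hf0
      have key1 : ∀ z ∈ A, (z ∈ A' ↔ aa ∈ A') := fun z hz => hside z aa (hz.symm.trans haa)
      have key2 : ∀ z ∉ A, (z ∈ A' ↔ bb ∈ A') := by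
        intro z hz
        have hzy : Del.Reachable z y0 := by
          rcases htot z with h | h
          · exact absurd h.symm hz
          · exact h
        have hby : Del.Reachable bb y0 := by
          rcases htot bb with h | h
          · exact absurd h.symm hbb
          · exact h
        exact hside z bb (hzy.trans hby.symm)
      have hopp : ¬(aa ∈ A' ↔ bb ∈ A') := by
        have heq2 : s(aa, bb) = s(a', b') := hf0eq.symm.trans hf0eq'
        rcases Sym2.eq_iff.mp heq2 with ⟨rfl, rfl⟩ | ⟨rfl, rfl⟩
        · exact fun h => hb' (h.mp ha')
        · exact fun h => hb' (h.mpr ha')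
      ext g
      constructor
      · exact fun hg => hsubD' hg
      · intro hg
        rw [hDcut] at hg
        obtain ⟨hgG, xx, hxx, yy, hyy, rfl⟩ := hg
        rw [hA']
        by_cases haaA' : aa ∈ A'
        · have hbbA' : bb ∉ A' := fun h => hopp ⟨fun _ => h, fun _ => haaA'⟩
          exact ⟨hgG, xx, (key1 xx hxx).mpr haaA', yy,
            fun h => hbbA' ((key2 yy hyy).mp h), rfl⟩
        · have hbbA' : bb ∈ A' := by
            by_contra h
            exact hopp ⟨fun h' => absurd h' haaA', fun h' => absurd h' h⟩
          exact ⟨hgG, yy, (key2 yy hyy).mpr hbbA', xx,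
            fun h => haaA' ((key1 xx hxx).mp h), Sym2.eq_swap.symm⟩
  · -- second conclusion
    rintro f ⟨hfG, hdet⟩
    rw [hdetour] at hdet
    obtain ⟨x, y, rfl, hnreach⟩ := hdet
    by_cases hfe : s(x, y) = s(x0, y0)
    · exact Or.inl hfe
    · refine Or.inr fun hfT => hnreach (Adj.reachable ?_)
      rw [hDel]
      simp only [deleteEdges_adj, Set.mem_singleton_iff]
      exact ⟨(T.mem_edgeSet).mp hfT, hfe⟩

end fundcut

lemma walk_crossing {W : Type*} {Γ : SimpleGraph W} (A : Set W) {x y : W} (p : Γ.Walk x y)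
    (hx : x ∈ A) (hy : y ∉ A) :
    ∃ a b, Γ.Adj a b ∧ s(a, b) ∈ p.edges ∧ a ∈ A ∧ b ∉ A := by
  induction p with
  | nil => exact absurd hx hy
  | @cons u c v hadj q ih =>
    by_cases hc : c ∈ A
    · obtain ⟨a, b, h1, h2, h3⟩ := ih hc hy
      exact ⟨a, b, h1, by simp [h2], h3⟩
    · exact ⟨u, c, hadj, by simp, hx, hc⟩

section helpers2
variable {W : Type*} {Γ : SimpleGraph W}

lemma path_first_edge {u w : W} :
    ∀ {v : W} (p : Γ.Walk u v), p.IsPath → s(u, w) ∈ p.edges →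
      ∃ (h : Γ.Adj u w) (r : Γ.Walk w v), p = Walk.cons h r := by
  intro v p
  cases p with
  | nil => intro _ hm; simp at hm
  | @cons _ x _ hadj r =>
    intro hp hm
    rw [Walk.edges_cons] at hm
    rcases List.mem_cons.mp hm with hfirst | hrest
    · have hx : x = w := by
        rcases Sym2.eq_iff.mp hfirst with ⟨_, h2⟩ | ⟨h1, _⟩
        · exact h2.symm
        · exact absurd h1 hadj.ne
      subst hx
      exact ⟨hadj, r, rfl⟩
    · exact absurd (Walk.fst_mem_support_of_mem_edges r hrest)
        ((Walk.cons_isPath_iff _ _).mp hp).2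

lemma cycle_decomp {u w : W} (c : Γ.Walk u u) (hc : c.IsCycle) (hm : s(u, w) ∈ c.edges) :
    ∃ (r : Γ.Walk w u), r.IsPath ∧ s(u, w) ∉ r.edges ∧
      (∀ g, g ∈ c.edges ↔ g = s(u, w) ∨ g ∈ r.edges) := by
  cases c with
  | nil => exact absurd hc Walk.IsCycle.not_of_nil
  | @cons _ x _ hadj q =>
    obtain ⟨hq, hnx⟩ := (Walk.cons_isCycle_iff q hadj).mp hc
    rw [Walk.edges_cons] at hm
    rcases List.mem_cons.mp hm with hfirst | hrest
    · have hx : x = w := by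
        rcases Sym2.eq_iff.mp hfirst with ⟨_, h2⟩ | ⟨h1, _⟩
        · exact h2.symm
        · exact absurd h1 hadj.ne
      subst hx
      exact ⟨q, hq, by rwa [← hfirst], fun g => by rw [Walk.edges_cons, List.mem_cons, hfirst]⟩
    · -- s(u,w) is in q; it must be the last edge of q
      have hqrev : s(u, w) ∈ q.reverse.edges := by
        rw [Walk.edges_reverse, List.mem_reverse]; exact hrest
      obtain ⟨h2, r2, hr2⟩ := path_first_edge q.reverse hq.reverse hqrev
      have hqe : q = (Walk.cons h2 r2).reverse := by rw [← hr2, Walk.reverse_reverse]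
      obtain ⟨hr2p, hur2⟩ := (Walk.cons_isPath_iff _ _).mp (hr2 ▸ hq.reverse)
      have hqedges : q.edges = (s(u, w) :: r2.edges).reverse := by
        rw [hqe, Walk.edges_reverse, Walk.edges_cons]
      have hwx : s(u, w) ≠ s(u, x) := fun hh => hnx (hh ▸ hrest)
      have hredges : (r2.concat hadj.symm).edges = r2.edges ++ [s(x, u)] := by
        rw [Walk.concat_eq_append, Walk.edges_append]; rfl
      have hnodupq : q.edges.Nodup := hq.edges_nodup
      have hnr2 : s(u, w) ∉ r2.edges := by
        rw [hqedges, List.nodup_reverse, List.nodup_cons] at hnodupq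
        exact hnodupq.1
      refine ⟨r2.concat hadj.symm, ?_, ?_, ?_⟩
      · rw [← Walk.isPath_reverse_iff, Walk.reverse_concat]
        exact (Walk.cons_isPath_iff _ _).mpr ⟨hr2p.reverse, by simpa using hur2⟩
      · rw [hredges]
        intro hmem
        rcases List.mem_append.mp hmem with h | h
        · exact hnr2 h
        · have heq : s(u, w) = s(x, u) := by simpa using h
          rcases Sym2.eq_iff.mp heq with ⟨h1, _⟩ | ⟨_, h2⟩
          · exact hadj.ne h1
          · exact hwx (by rw [h2])
      · intro g
        rw [Walk.edges_cons, List.mem_cons, hqedges, List.mem_reverse, List.mem_cons,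
          hredges, List.mem_append]
        constructor
        · rintro (rfl | rfl | h)
          · exact Or.inr (Or.inr (by simp [Sym2.eq_swap]))
          · exact Or.inl rfl
          · exact Or.inr (Or.inl h)
        · rintro (rfl | h | h)
          · exact Or.inr (Or.inl rfl)
          · exact Or.inr (Or.inr h)
          · exact Or.inl (by simpa [Sym2.eq_swap] using h)

end helpers2

section helpers3
variable {W : Type*} {Γ Γ' : SimpleGraph W}

lemma cycle_contains (hacyc : Γ'.IsAcyclic) {a : Sym2 W}
    (hsub : ∀ g ∈ Γ.edgeSet, g ≠ a → g ∈ Γ'.edgeSet)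
    {v : W} (c : Γ.Walk v v) (hc : c.IsCycle) : a ∈ c.edges := by
  by_contra hna
  have hq : ∀ g ∈ c.edges, g ∈ Γ'.edgeSet := fun g hg =>
    hsub g (c.edges_subset_edgeSet hg) (fun hh => hna (hh ▸ hg))
  exact hacyc _ (hc.transfer hq)

lemma unique_cycle_edges (hacyc : Γ'.IsAcyclic) {u w : W}
    (hsub : ∀ g ∈ Γ.edgeSet, g ≠ s(u, w) → g ∈ Γ'.edgeSet)
    {v : W} (c : Γ.Walk v v) (hc : c.IsCycle) :
    ∃ (r : Γ'.Walk w u), r.IsPath ∧ {g | g ∈ c.edges} = insert s(u, w) {g | g ∈ r.edges} := by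
  have ha : s(u, w) ∈ c.edges := cycle_contains hacyc hsub c hc
  have hu : u ∈ c.support := c.fst_mem_support_of_mem_edges ha
  classical
  have hc' : (c.rotate u hu).IsCycle := hc.rotate hu
  have ha' : s(u, w) ∈ (c.rotate u hu).edges := (c.rotate_edges u hu).mem_iff.mpr ha
  obtain ⟨r, hr, hnar, hmem⟩ := cycle_decomp (c.rotate u hu) hc' ha'
  have hrsub : ∀ g ∈ r.edges, g ∈ Γ'.edgeSet := fun g hg =>
    hsub g (r.edges_subset_edgeSet hg) (fun hh => hnar (hh ▸ hg))
  refine ⟨r.transfer Γ' hrsub, hr.transfer hrsub, ?_⟩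
  ext g
  simp only [Set.mem_setOf_eq, Set.mem_insert_iff, Walk.edges_transfer]
  rw [← (c.rotate_edges u hu).mem_iff, hmem g]

end helpers3

section dualside
variable {V F : Type*}

lemma dualTree_edgeSet_sub (P : PlaneDual V F) (T : SimpleGraph V) :
    (dualTree P T).edgeSet ⊆ P.d '' (P.G.edgeSet \ T.edgeSet) := by
  rw [dualTree, edgeSet_fromEdgeSet]
  exact Set.diff_subset

lemma dualTree_edgeSet_sub' (P : PlaneDual V F) (T : SimpleGraph V) :
    (dualTree P T).edgeSet ⊆ P.Gd.edgeSet := by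
  intro g hg
  obtain ⟨f, hf, rfl⟩ := dualTree_edgeSet_sub P T hg
  exact P.dBij.mapsTo hf.1

lemma dualTree_isAcyclic (P : PlaneDual V F) {T : SimpleGraph V} (hT : IsSpanningTree P.G T) :
    (dualTree P T).IsAcyclic := by
  intro v c hc
  have hce : ∀ g ∈ c.edges, g ∈ (dualTree P T).edgeSet := fun g hg => c.edges_subset_edgeSet hg
  set Ecyc : Set (Sym2 V) := {f | f ∈ P.G.edgeSet ∧ f ∉ T.edgeSet ∧ P.d f ∈ c.edges} with hEcyc
  have himg : P.d '' Ecyc = {g | g ∈ c.edges} := by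
    ext g
    constructor
    · rintro ⟨f, ⟨-, -, hm⟩, rfl⟩
      exact hm
    · intro hg
      obtain ⟨f, hf, rfl⟩ := dualTree_edgeSet_sub P T (hce g hg)
      exact ⟨f, ⟨hf.1, hf.2, hg⟩, rfl⟩
  have hcyc : IsCycleEdges P.Gd (P.d '' Ecyc) := by
    refine ⟨v, c.transfer P.Gd (fun g hg => dualTree_edgeSet_sub' P T (hce g hg)),
      hc.transfer _, ?_⟩
    rw [himg]
    ext g
    simp [Walk.edges_transfer]
  have hmin := (P.minCut_iff_cycle Ecyc (fun f hf => hf.1)).mpr hcyc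
  obtain ⟨⟨A0, hA0⟩, ⟨f1, hf1⟩, -⟩ := hmin
  rw [hA0] at hf1
  obtain ⟨hf1G, a1, ha1, b1, hb1, rfl⟩ := hf1
  obtain ⟨wlk⟩ := hT.2.1.1 a1 b1
  obtain ⟨a, b, hab, hmemw, haA, hbA⟩ := walk_crossing A0 wlk ha1 hb1
  have habmem : s(a, b) ∈ Ecyc := by
    rw [hA0]
    exact ⟨edgeSet_subset_edgeSet.mpr hT.1 ((T.mem_edgeSet).mpr hab), a, haA, b, hbA, rfl⟩
  exact habmem.2.1 ((T.mem_edgeSet).mpr hab)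

end dualside

theorem stmt5 (P : PlaneDual V F) (T : SimpleGraph V) (hT : IsSpanningTree P.G T)
    (e : Sym2 V) (he : e ∈ T.edgeSet) :
    ∀ (v : F) (c : (SimpleGraph.fromEdgeSet
        (insert (P.d e) (dualTree P T).edgeSet)).Walk v v), c.IsCycle →
      {g | g ∈ c.edges} = P.d '' {f | f ∈ P.G.edgeSet ∧ OnDetour T e f} := by
  obtain ⟨x0, y0, rfl⟩ := Sym2.exists.mp ⟨e, rfl⟩
  set H := SimpleGraph.fromEdgeSet (insert (P.d s(x0, y0)) (dualTree P T).edgeSet) with hH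
  intro v c hc
  obtain ⟨hle, htree⟩ := hT
  set D : Set (Sym2 V) := {f | f ∈ P.G.edgeSet ∧ OnDetour T s(x0, y0) f} with hD
  obtain ⟨hmin, hDT⟩ := fundamental_cut hle htree he
  obtain ⟨v', c', hc', hEq⟩ := (P.minCut_iff_cycle D (fun f hf => hf.1)).mp hmin
  have heG : s(x0, y0) ∈ P.G.edgeSet := edgeSet_subset_edgeSet.mpr hle he
  have haGd : P.d s(x0, y0) ∈ P.Gd.edgeSet := P.dBij.mapsTo heG
  obtain ⟨u, w, ha⟩ := Sym2.exists.mp ⟨P.d s(x0, y0), rfl⟩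
  have hHsub : ∀ g ∈ H.edgeSet, g ≠ s(u, w) → g ∈ (dualTree P T).edgeSet := by
    intro g hg hne
    rw [hH, edgeSet_fromEdgeSet] at hg
    rcases hg.1 with h | h
    · exact absurd (h.trans ha) hne
    · exact h
  have hc'edges : ∀ g ∈ c'.edges, g ∈ H.edgeSet := by
    intro g hg
    have hgD : g ∈ P.d '' D := by rw [hEq]; exact hg
    obtain ⟨f, hf, rfl⟩ := hgD
    rw [hH, edgeSet_fromEdgeSet]
    rcases hDT f hf with rfl | hfT
    · exact ⟨Set.mem_insert _ _, P.Gd.not_isDiag_of_mem_edgeSet haGd⟩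
    · have hfd : P.d f ∈ (dualTree P T).edgeSet := by
        rw [dualTree, edgeSet_fromEdgeSet]
        exact ⟨⟨f, ⟨hf.1, hfT⟩, rfl⟩,
          P.Gd.not_isDiag_of_mem_edgeSet (P.dBij.mapsTo hf.1)⟩
      exact ⟨Set.mem_insert_of_mem _ hfd, P.Gd.not_isDiag_of_mem_edgeSet (P.dBij.mapsTo hf.1)⟩
  have hacyc := dualTree_isAcyclic P ⟨hle, htree⟩
  have hHsub' : ∀ g ∈ H.edgeSet, g ≠ s(u, w) → g ∈ (dualTree P T).edgeSet := hHsub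
  obtain ⟨r1, hr1, hs1⟩ := unique_cycle_edges hacyc hHsub' c hc
  obtain ⟨r2, hr2, hs2⟩ := unique_cycle_edges hacyc hHsub'
    (c'.transfer H hc'edges) (hc'.transfer hc'edges)
  have hr12 : r1 = r2 :=
    congrArg Subtype.val (isAcyclic_iff_path_unique.mp hacyc ⟨r1, hr1⟩ ⟨r2, hr2⟩)
  calc {g | g ∈ c.edges} = insert s(u, w) {g | g ∈ r1.edges} := hs1
    _ = insert s(u, w) {g | g ∈ r2.edges} := by rw [hr12]
    _ = {g | g ∈ (c'.transfer H hc'edges).edges} := hs2.symm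
    _ = {g | g ∈ c'.edges} := by rw [Walk.edges_transfer]
    _ = P.d '' D := hEq.symm
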